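/- Let d ≥ 1, let b : ℝ^d → ℝ^d and k : ℝ^d → [0, ∞), and let f, g : ℝ̂^d → ℝ be C² on ℝ̂^d. Then for every x ∈ ℝ^d, the extended generator with killing 𝒜̂ satisfies the product rule 𝒜̂(f·g)(x) = f(x)·𝒜̂g(x) + (⟨b(x), ∇f(x)⟩ + (1/2)Δf(x))·g(x) + ⟨∇f(x), ∇g(x)⟩ − k(x)·(f(x) − f(∞))·g(∞), where the product f·g is defined pointwise on ℝ̂^d with (f·g)(∞) = f(∞)g(∞). -/

import Mathlib

open OnePoint

noncomputable section

/-- Laplacian of `f : ℝ^d → ℝ` at `x`, computed as the trace of the second derivative. -/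
def lap {d : ℕ} (f : EuclideanSpace ℝ (Fin d) → ℝ) (x : EuclideanSpace ℝ (Fin d)) : ℝ :=
  ∑ i, fderiv ℝ (fderiv ℝ f) x (EuclideanSpace.single i 1) (EuclideanSpace.single i 1)

/-- The restriction of a function on `ℝ̂^d = ℝ^d ∪ {∞}` to `ℝ^d`. -/
def restr {d : ℕ} (f : OnePoint (EuclideanSpace ℝ (Fin d)) → ℝ) :
    EuclideanSpace ℝ (Fin d) → ℝ :=
  fun x => f x

/-- `f : ℝ̂^d → ℝ` is C² on `ℝ̂^d`: continuous on the one-point compactification, and its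
restriction to `ℝ^d` is twice continuously differentiable. -/
def C2Hat {d : ℕ} (f : OnePoint (EuclideanSpace ℝ (Fin d)) → ℝ) : Prop :=
  Continuous f ∧ ContDiff ℝ 2 (restr f)

/-- The extended generator with killing on `ℝ̂^d`:
`𝒜̂f(x) = ⟨b(x), ∇f(x)⟩ + (1/2)Δf(x) − k(x)(f(x) − f(∞))` for `x ∈ ℝ^d`, `𝒜̂f(∞) = 0`. -/
def hatGen {d : ℕ} (b : EuclideanSpace ℝ (Fin d) → EuclideanSpace ℝ (Fin d))
    (k : EuclideanSpace ℝ (Fin d) → ℝ)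
    (f : OnePoint (EuclideanSpace ℝ (Fin d)) → ℝ) :
    OnePoint (EuclideanSpace ℝ (Fin d)) → ℝ
  | ∞ => 0
  | (x : EuclideanSpace ℝ (Fin d)) =>
      (inner ℝ (b x) (gradient (restr f) x) : ℝ) + (1 / 2) * lap (restr f) x
        - k x * (f x - f ∞)

lemma inner_grad {d : ℕ} (F : EuclideanSpace ℝ (Fin d) → ℝ)
    (x v : EuclideanSpace ℝ (Fin d)) :
    (inner ℝ v (gradient F x) : ℝ) = fderiv ℝ F x v := by
  rw [real_inner_comm]
  exact InnerProductSpace.toDual_symm_apply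

lemma inner_grad_grad {d : ℕ} (F G : EuclideanSpace ℝ (Fin d) → ℝ)
    (x : EuclideanSpace ℝ (Fin d)) :
    (inner ℝ (gradient F x) (gradient G x) : ℝ) =
      ∑ i, fderiv ℝ F x (EuclideanSpace.single i 1) *
        fderiv ℝ G x (EuclideanSpace.single i 1) := by
  rw [PiLp.inner_apply]
  refine Finset.sum_congr rfl fun i _ => ?_
  have hF : (gradient F x) i = fderiv ℝ F x (EuclideanSpace.single i 1) := by
    rw [← inner_grad F x (EuclideanSpace.single i 1), real_inner_comm,
      EuclideanSpace.inner_single_right]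
    simp
  have hG : (gradient G x) i = fderiv ℝ G x (EuclideanSpace.single i 1) := by
    rw [← inner_grad G x (EuclideanSpace.single i 1), real_inner_comm,
      EuclideanSpace.inner_single_right]
    simp
  simp [hF, hG, mul_comm]

lemma fderiv2_mul {d : ℕ} {F G : EuclideanSpace ℝ (Fin d) → ℝ}
    (hF : ContDiff ℝ 2 F) (hG : ContDiff ℝ 2 G) (x v w : EuclideanSpace ℝ (Fin d)) :
    fderiv ℝ (fderiv ℝ (fun y => F y * G y)) x v w =
      F x * fderiv ℝ (fderiv ℝ G) x v w + fderiv ℝ F x v * fderiv ℝ G x w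
      + G x * fderiv ℝ (fderiv ℝ F) x v w + fderiv ℝ G x v * fderiv ℝ F x w := by
  have hF1 : Differentiable ℝ F := hF.differentiable (by norm_num)
  have hG1 : Differentiable ℝ G := hG.differentiable (by norm_num)
  have hFd : Differentiable ℝ (fderiv ℝ F) :=
    (hF.fderiv_right (m := 1) (by norm_num)).differentiable (by norm_num)
  have hGd : Differentiable ℝ (fderiv ℝ G) :=
    (hG.fderiv_right (m := 1) (by norm_num)).differentiable (by norm_num)
  have heq : fderiv ℝ (fun y => F y * G y) =
      fun y => F y • fderiv ℝ G y + G y • fderiv ℝ F y :=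
    funext fun y => fderiv_mul (hF1 y) (hG1 y)
  rw [heq]
  have h1 : DifferentiableAt ℝ (fun y => F y • fderiv ℝ G y) x := (hF1 x).smul (hGd x)
  have h2 : DifferentiableAt ℝ (fun y => G y • fderiv ℝ F y) x := (hG1 x).smul (hFd x)
  rw [fderiv_fun_add h1 h2, fderiv_fun_smul (hF1 x) (hGd x), fderiv_fun_smul (hG1 x) (hFd x)]
  simp [mul_comm]
  ring

lemma lap_mul {d : ℕ} {F G : EuclideanSpace ℝ (Fin d) → ℝ}
    (hF : ContDiff ℝ 2 F) (hG : ContDiff ℝ 2 G) (x : EuclideanSpace ℝ (Fin d)) :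
    lap (fun y => F y * G y) x =
      F x * lap G x + G x * lap F x
      + 2 * ∑ i, fderiv ℝ F x (EuclideanSpace.single i 1) *
          fderiv ℝ G x (EuclideanSpace.single i 1) := by
  unfold lap
  rw [Finset.mul_sum, Finset.mul_sum, Finset.mul_sum, ← Finset.sum_add_distrib,
    ← Finset.sum_add_distrib]
  refine Finset.sum_congr rfl fun i _ => ?_
  rw [fderiv2_mul hF hG]
  ring


/-- **Product rule for the extended generator with killing**: for `f, g` C² on `ℝ̂^d`
and `x ∈ ℝ^d`,
`𝒜̂(fg)(x) = f(x)𝒜̂g(x) + (⟨b(x),∇f(x)⟩ + ½Δf(x))g(x) + ⟨∇f(x),∇g(x)⟩ − k(x)(f(x)−f(∞))g(∞)`. -/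
theorem hatGen_mul {d : ℕ} (hd : 1 ≤ d)
    (b : EuclideanSpace ℝ (Fin d) → EuclideanSpace ℝ (Fin d))
    (k : EuclideanSpace ℝ (Fin d) → ℝ) (hk0 : ∀ x, 0 ≤ k x)
    (f g : OnePoint (EuclideanSpace ℝ (Fin d)) → ℝ)
    (hf : C2Hat f) (hg : C2Hat g) :
    ∀ x : EuclideanSpace ℝ (Fin d),
      hatGen b k (fun y => f y * g y) x =
        f x * hatGen b k g x
          + ((inner ℝ (b x) (gradient (restr f) x) : ℝ) + (1 / 2) * lap (restr f) x) * g x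
          + (inner ℝ (gradient (restr f) x) (gradient (restr g) x) : ℝ)
          - k x * (f x - f ∞) * g ∞ := by
  intro x
  obtain ⟨-, hF⟩ := hf
  obtain ⟨-, hG⟩ := hg
  have hrestr : restr (fun y => f y * g y) = fun y => restr f y * restr g y := rfl
  show (inner ℝ (b x) (gradient (restr (fun y => f y * g y)) x) : ℝ)
      + (1 / 2) * lap (restr (fun y => f y * g y)) x
      - k x * (f x * g x - f ∞ * g ∞) = _
  show _ = f x * ((inner ℝ (b x) (gradient (restr g) x) : ℝ) + (1 / 2) * lap (restr g) x
      - k x * (g x - g ∞)) + _ + _ - _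
  rw [hrestr, inner_grad, inner_grad, inner_grad, inner_grad_grad, lap_mul hF hG]
  have hmul : fderiv ℝ (fun y => restr f y * restr g y) x (b x) =
      restr f x * fderiv ℝ (restr g) x (b x) + restr g x * fderiv ℝ (restr f) x (b x) := by
    rw [fderiv_fun_mul (hF.differentiable (by norm_num) x) (hG.differentiable (by norm_num) x)]
    simp
  rw [hmul]
  have hfx : restr f x = f x := rfl
  have hgx : restr g x = g x := rfl
  rw [hfx, hgx]
  ring
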